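/- Let A be an n×n nonnegative matrix whose entries are continuous, strictly increasing functions of a real parameter α, with each row sum tending to 0 as α → −∞ and to ∞ as α → +∞, and suppose A(α) is irreducible for all α. Then there is a unique α* ∈ ℝ such that the spectral radius (Perron–Frobenius eigenvalue) of A(α*) equals 1. -/

import Mathlib

/-- The spectral radius of a real square matrix: the supremum of the absolute
values of its complex eigenvalues. -/
noncomputable def specRad {n : ℕ} (M : Matrix (Fin n) (Fin n) ℝ) : ℝ :=
  sSup ((fun z : ℂ => ‖z‖) '' spectrum ℂ (M.map Complex.ofReal))

/-- A nonnegative matrix is irreducible if its directed graph is strongly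
connected, i.e. for all `i j` some power has a positive `(i,j)` entry. -/
def MatIrreducible {n : ℕ} (M : Matrix (Fin n) (Fin n) ℝ) : Prop :=
  ∀ i j, ∃ m : ℕ, 0 < (M ^ (m + 1)) i j


open Filter
open scoped ENNReal NNReal

namespace SpecAux

attribute [local instance] Matrix.linftyOpNormedRing Matrix.linftyOpNormedAlgebra
  Matrix.linftyOpNormedSpace

variable {n : ℕ}

noncomputable instance : CompleteSpace (Matrix (Fin n) (Fin n) ℂ) :=
  FiniteDimensional.complete ℂ _

noncomputable def CM (M : Matrix (Fin n) (Fin n) ℝ) : Matrix (Fin n) (Fin n) ℂ :=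
  M.map Complex.ofReal

lemma CM_pow (M : Matrix (Fin n) (Fin n) ℝ) (k : ℕ) : CM (M ^ k) = CM M ^ k := by
  exact
    map_pow (Complex.ofRealHom.mapMatrix (m := Fin n)) M k

lemma CM_smul (r : ℝ) (M : Matrix (Fin n) (Fin n) ℝ) : CM (r • M) = (r : ℂ) • CM M := by
  ext i j
  simp [CM, Matrix.map_apply]

noncomputable def F (M : Matrix (Fin n) (Fin n) ℝ) : ℝ≥0∞ := spectralRadius ℂ (CM M)

/-- row sums bound the norm -/
lemma nnnorm_CM_le {M : Matrix (Fin n) (Fin n) ℝ} (hM : ∀ i j, 0 ≤ M i j) {s : ℝ}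
    (hs0 : 0 ≤ s) (hs : ∀ i, (∑ j, M i j) ≤ s) : (‖CM M‖₊ : ℝ) ≤ s := by
  have h : ‖CM M‖₊ ≤ s.toNNReal := by
    rw [Matrix.linfty_opNNNorm_def]
    refine Finset.sup_le fun i _ => ?_
    rw [← NNReal.coe_le_coe]
    push_cast
    calc ∑ j, ‖(CM M) i j‖ = ∑ j, M i j := by
          refine Finset.sum_congr rfl fun j _ => ?_
          simp [CM, Matrix.map_apply, Complex.norm_real, abs_of_nonneg (hM i j)]
      _ ≤ s := hs i
      _ ≤ max s 0 := le_max_left _ _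
      _ = (s.toNNReal : ℝ) := by rw [Real.coe_toNNReal']
  calc (‖CM M‖₊ : ℝ) ≤ (s.toNNReal : ℝ) := by exact_mod_cast h
    _ = s := Real.coe_toNNReal _ hs0

lemma rowsum_le_nnnorm_CM {M : Matrix (Fin n) (Fin n) ℝ} (hM : ∀ i j, 0 ≤ M i j) (i : Fin n) :
    (∑ j, M i j) ≤ (‖CM M‖₊ : ℝ) := by
  rw [Matrix.linfty_opNNNorm_def]
  calc (∑ j, M i j) = ((∑ j, ‖(CM M) i j‖₊ : ℝ≥0) : ℝ) := by
        push_cast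
        refine Finset.sum_congr rfl fun j _ => ?_
        simp [CM, Matrix.map_apply, Complex.norm_real, abs_of_nonneg (hM i j)]
    _ ≤ _ := by
        exact_mod_cast NNReal.coe_le_coe.mpr
          (Finset.le_sup (f := fun i => ∑ j, ‖(CM M) i j‖₊) (Finset.mem_univ i))

lemma pow_nonneg' {M : Matrix (Fin n) (Fin n) ℝ} (hM : ∀ i j, 0 ≤ M i j) (k : ℕ) :
    ∀ i j, 0 ≤ (M ^ k) i j := by
  induction k with
  | zero => intro i j; by_cases h : i = j <;> simp [pow_zero, Matrix.one_apply, h]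
  | succ k ih =>
      intro i j
      rw [pow_succ, Matrix.mul_apply]
      exact Finset.sum_nonneg fun l _ => mul_nonneg (ih i l) (hM l j)

lemma pow_mono {M N : Matrix (Fin n) (Fin n) ℝ} (hM : ∀ i j, 0 ≤ M i j)
    (h : ∀ i j, M i j ≤ N i j) (k : ℕ) : ∀ i j, (M ^ k) i j ≤ (N ^ k) i j := by
  have hN : ∀ i j, 0 ≤ N i j := fun i j => le_trans (hM i j) (h i j)
  induction k with
  | zero => intro i j; simp [pow_zero]
  | succ k ih =>
      intro i j
      rw [pow_succ, pow_succ, Matrix.mul_apply, Matrix.mul_apply]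
      refine Finset.sum_le_sum fun l _ => ?_
      exact mul_le_mul (ih i l) (h l j) (hM l j) (le_trans (pow_nonneg' hM k i l) (ih i l))

lemma pow_rowsum_ge {M : Matrix (Fin n) (Fin n) ℝ} (hM : ∀ i j, 0 ≤ M i j) {r : ℝ}
    (hr0 : 0 ≤ r) (hr : ∀ i, r ≤ ∑ j, M i j) (k : ℕ) :
    ∀ i, r ^ k ≤ ∑ j, (M ^ k) i j := by
  induction k with
  | zero => intro i; simp [pow_zero, Matrix.one_apply, Finset.sum_ite_eq]
  | succ k ih =>
      intro i
      have : ∑ j, (M ^ (k+1)) i j = ∑ l, M i l * (∑ j, (M ^ k) l j) := by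
        rw [pow_succ']
        simp_rw [Matrix.mul_apply, Finset.mul_sum]
        rw [Finset.sum_comm]
      rw [this, pow_succ']
      calc r * r ^ k ≤ r * r ^ k := le_refl _
        _ ≤ (∑ l, M i l) * r ^ k := by
            exact mul_le_mul_of_nonneg_right (hr i) (pow_nonneg hr0 k)
        _ = ∑ l, M i l * r ^ k := by rw [Finset.sum_mul]
        _ ≤ ∑ l, M i l * (∑ j, (M ^ k) l j) := by
            refine Finset.sum_le_sum fun l _ => ?_
            exact mul_le_mul_of_nonneg_left (ih l) (hM i l)


open Topology

attribute [local instance] Matrix.linfty_opNormOneClass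

lemma nnnorm_CM_mono {M N : Matrix (Fin n) (Fin n) ℝ} (hM : ∀ i j, 0 ≤ M i j)
    (h : ∀ i j, M i j ≤ N i j) : ‖CM M‖₊ ≤ ‖CM N‖₊ := by
  rw [Matrix.linfty_opNNNorm_def, Matrix.linfty_opNNNorm_def]
  refine Finset.sup_mono_fun fun i _ => ?_
  refine Finset.sum_le_sum fun j _ => ?_
  rw [← NNReal.coe_le_coe]
  simp only [coe_nnnorm, CM, Matrix.map_apply, Complex.norm_real]
  rw [Real.norm_eq_abs, Real.norm_eq_abs, abs_of_nonneg (hM i j),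
    abs_of_nonneg (le_trans (hM i j) (h i j))]
  exact h i j

lemma F_gelfand (M : Matrix (Fin n) (Fin n) ℝ) :
    Tendsto (fun k : ℕ => (‖CM (M ^ k)‖₊ : ℝ≥0∞) ^ (1/(k:ℝ))) atTop (𝓝 (F M)) := by
  simpa [CM_pow, F] using
    spectrum.pow_nnnorm_pow_one_div_tendsto_nhds_spectralRadius (CM M)

lemma F_le_pow (hn : 0 < n) (M : Matrix (Fin n) (Fin n) ℝ) (k : ℕ) :
    F M ≤ (‖CM (M ^ (k+1))‖₊ : ℝ≥0∞) ^ (1/(k+1:ℝ)) := by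
  haveI : Nonempty (Fin n) := ⟨⟨0, hn⟩⟩
  have := spectrum.spectralRadius_le_pow_nnnorm_pow_one_div ℂ (CM M) k
  simpa [CM_pow, F, nnnorm_one, ENNReal.one_rpow] using this

lemma F_le_nnnorm (hn : 0 < n) (M : Matrix (Fin n) (Fin n) ℝ) :
    F M ≤ (‖CM M‖₊ : ℝ≥0∞) := by
  haveI : Nonempty (Fin n) := ⟨⟨0, hn⟩⟩
  exact spectrum.spectralRadius_le_nnnorm (𝕜 := ℂ) (CM M)

lemma F_mono (hn : 0 < n) {M N : Matrix (Fin n) (Fin n) ℝ} (hM : ∀ i j, 0 ≤ M i j)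
    (h : ∀ i j, M i j ≤ N i j) : F M ≤ F N := by
  refine ge_of_tendsto (F_gelfand N) ?_
  filter_upwards [eventually_ge_atTop 1] with k hk
  obtain ⟨m, rfl⟩ : ∃ m, k = m + 1 := ⟨k - 1, by omega⟩
  refine (F_le_pow hn M m).trans ?_
  push_cast
  refine ENNReal.rpow_le_rpow ?_ (by positivity)
  exact_mod_cast nnnorm_CM_mono (pow_nonneg' hM (m+1)) (pow_mono hM h (m+1))

lemma F_le_ofReal (hn : 0 < n) {M : Matrix (Fin n) (Fin n) ℝ} (hM : ∀ i j, 0 ≤ M i j)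
    {s : ℝ} (hs0 : 0 ≤ s) (hs : ∀ i, (∑ j, M i j) ≤ s) : F M ≤ ENNReal.ofReal s := by
  refine (F_le_nnnorm hn M).trans ?_
  rw [ENNReal.ofReal, ENNReal.coe_le_coe, ← NNReal.coe_le_coe, Real.coe_toNNReal _ hs0]
  exact nnnorm_CM_le hM hs0 hs

lemma ofReal_le_F (hn : 0 < n) {M : Matrix (Fin n) (Fin n) ℝ} (hM : ∀ i j, 0 ≤ M i j)
    {r : ℝ} (hr0 : 0 ≤ r) (hr : ∀ i, r ≤ ∑ j, M i j) : ENNReal.ofReal r ≤ F M := by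
  refine ge_of_tendsto (F_gelfand M) ?_
  filter_upwards [eventually_ge_atTop 1] with k hk
  have hk0 : (k : ℝ) ≠ 0 := by positivity
  have h1 : r ^ k ≤ (‖CM (M ^ k)‖₊ : ℝ) :=
    le_trans (pow_rowsum_ge hM hr0 hr k ⟨0, hn⟩)
      (rowsum_le_nnnorm_CM (pow_nonneg' hM k) ⟨0, hn⟩)
  have h2 : (ENNReal.ofReal r) ^ k ≤ (‖CM (M ^ k)‖₊ : ℝ≥0∞) := by
    rw [← ENNReal.ofReal_pow hr0]
    exact le_trans (ENNReal.ofReal_le_ofReal h1) (le_of_eq (ENNReal.ofReal_coe_nnreal))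
  calc ENNReal.ofReal r = ((ENNReal.ofReal r) ^ k) ^ (1/(k:ℝ)) := by
        rw [← ENNReal.rpow_natCast, ← ENNReal.rpow_mul, mul_one_div_cancel hk0,
          ENNReal.rpow_one]
    _ ≤ _ := ENNReal.rpow_le_rpow h2 (by positivity)

lemma F_smul (t : ℝ≥0) (M : Matrix (Fin n) (Fin n) ℝ) :
    F ((t : ℝ) • M) = (t : ℝ≥0∞) * F M := by
  have h2 : Tendsto (fun k : ℕ => (t : ℝ≥0∞) * (‖CM (M ^ k)‖₊ : ℝ≥0∞) ^ (1/(k:ℝ)))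
      atTop (𝓝 ((t : ℝ≥0∞) * F M)) :=
    ENNReal.Tendsto.const_mul (F_gelfand M) (Or.inr ENNReal.coe_ne_top)
  have hEq : ∀ᶠ k : ℕ in atTop,
      (‖CM (((t:ℝ) • M) ^ k)‖₊ : ℝ≥0∞) ^ (1/(k:ℝ))
        = (t : ℝ≥0∞) * (‖CM (M ^ k)‖₊ : ℝ≥0∞) ^ (1/(k:ℝ)) := by
    filter_upwards [eventually_ge_atTop 1] with k hk
    have hk0 : (k : ℝ) ≠ 0 := by positivity
    rw [smul_pow, CM_smul, nnnorm_smul]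
    have hnt : ‖(((t:ℝ) ^ k : ℝ) : ℂ)‖₊ = t ^ k := by
      rw [Complex.nnnorm_real, ← NNReal.coe_pow, NNReal.nnnorm_eq]
    rw [hnt, ENNReal.coe_mul,
      ENNReal.mul_rpow_of_nonneg _ _ (by positivity : (0:ℝ) ≤ 1/(k:ℝ))]
    congr 1
    rw [ENNReal.coe_pow, ← ENNReal.rpow_natCast, ← ENNReal.rpow_mul,
      mul_one_div_cancel hk0, ENNReal.rpow_one]
  exact tendsto_nhds_unique (F_gelfand ((t:ℝ) • M)) (Filter.Tendsto.congr' (Filter.EventuallyEq.symm hEq) h2)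

end SpecAux

namespace SpecAux2
open SpecAux

attribute [local instance] Matrix.linftyOpNormedRing Matrix.linftyOpNormedAlgebra
  Matrix.linftyOpNormedSpace Matrix.linfty_opNormOneClass

variable {n : ℕ}

lemma F_ne_top (hn : 0 < n) (M : Matrix (Fin n) (Fin n) ℝ) : F M ≠ ⊤ :=
  ne_top_of_le_ne_top ENNReal.coe_ne_top (F_le_nnnorm hn M)

lemma specRad_eq_toReal_F (hn : 0 < n) (M : Matrix (Fin n) (Fin n) ℝ) :
    sSup ((fun z : ℂ => ‖z‖) '' spectrum ℂ (M.map Complex.ofReal)) = (F M).toReal := by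
  haveI : Nonempty (Fin n) := ⟨⟨0, hn⟩⟩
  have hne : (spectrum ℂ (CM M)).Nonempty := spectrum.nonempty (CM M)
  have hcomp : IsCompact (spectrum ℂ (CM M)) := spectrum.isCompact (CM M)
  have hK : IsCompact ((fun z : ℂ => ‖z‖) '' spectrum ℂ (CM M)) :=
    hcomp.image continuous_norm
  obtain ⟨r, hrK, hub⟩ := hK.exists_isGreatest (hne.image _)
  obtain ⟨k₀, hk₀, hk₀r⟩ := hrK
  have hr0 : 0 ≤ r := by rw [← hk₀r]; exact norm_nonneg k₀
  have hF : F M = ENNReal.ofReal r := by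
    refine le_antisymm ?_ ?_
    · refine iSup₂_le fun k hk => ?_
      rw [← enorm_eq_nnnorm, ← ofReal_norm]
      exact ENNReal.ofReal_le_ofReal (hub ⟨k, hk, rfl⟩)
    · have : ENNReal.ofReal r = (‖k₀‖₊ : ℝ≥0∞) := by
        rw [← enorm_eq_nnnorm, ← ofReal_norm, ← hk₀r]
      rw [this]
      exact le_iSup₂ (f := fun k (_ : k ∈ spectrum ℂ (CM M)) => (‖k‖₊ : ℝ≥0∞)) k₀ hk₀
  have : sSup ((fun z : ℂ => ‖z‖) '' spectrum ℂ (CM M)) = r := IsGreatest.csSup_eq ⟨⟨k₀, hk₀, hk₀r⟩, hub⟩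
  rw [show M.map Complex.ofReal = CM M from rfl, this, hF, ENNReal.toReal_ofReal hr0]

/-- entries of powers are continuous in a parameter -/
lemma cont_pow_entry {A : ℝ → Matrix (Fin n) (Fin n) ℝ}
    (hcont : ∀ i j, Continuous fun α => A α i j) (k : ℕ) (i j : Fin n) :
    Continuous fun α => ((A α) ^ k) i j := by
  induction k generalizing i j with
  | zero =>
      simp only [pow_zero, Matrix.one_apply]
      split_ifs <;> exact continuous_const
  | succ k ih =>
      simp only [pow_succ, Matrix.mul_apply]
      exact continuous_finset_sum _ fun l _ => (ih i l).mul (hcont l j)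

end SpecAux2

namespace SpecAux3
open SpecAux SpecAux2 Filter Topology
open scoped ENNReal NNReal

attribute [local instance] Matrix.linftyOpNormedRing Matrix.linftyOpNormedAlgebra
  Matrix.linftyOpNormedSpace Matrix.linfty_opNormOneClass

variable {n : ℕ}

lemma coe_nnnorm_CM_le {M : Matrix (Fin n) (Fin n) ℝ} (hM : ∀ i j, 0 ≤ M i j)
    {s : ℝ} (hs0 : 0 ≤ s) (hs : ∀ i, (∑ j, M i j) ≤ s) :
    (‖CM M‖₊ : ℝ≥0∞) ≤ ENNReal.ofReal s := by
  rw [ENNReal.ofReal, ENNReal.coe_le_coe, ← NNReal.coe_le_coe, Real.coe_toNNReal _ hs0]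
  exact nnnorm_CM_le hM hs0 hs

lemma specRad_eq (hn : 0 < n) (M : Matrix (Fin n) (Fin n) ℝ) :
    specRad M = (F M).toReal :=
  specRad_eq_toReal_F hn M

end SpecAux3

open SpecAux SpecAux2 SpecAux3 Filter Topology
open scoped ENNReal NNReal

attribute [local instance] Matrix.linftyOpNormedRing Matrix.linftyOpNormedAlgebra
  Matrix.linftyOpNormedSpace Matrix.linfty_opNormOneClass

theorem stmt_12 {n : ℕ} (hn : 0 < n) (A : ℝ → Matrix (Fin n) (Fin n) ℝ)
    (hnonneg : ∀ α i j, 0 ≤ A α i j)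
    (hcont : ∀ i j, Continuous (fun α => A α i j))
    (hmono : ∀ i j, StrictMono (fun α => A α i j))
    (hrow0 : ∀ i, Filter.Tendsto (fun α => ∑ j, A α i j) Filter.atBot (nhds 0))
    (hrowTop : ∀ i, Filter.Tendsto (fun α => ∑ j, A α i j) Filter.atTop Filter.atTop)
    (hirr : ∀ α, MatIrreducible (A α)) :
    ∃! α : ℝ, specRad (A α) = 1 := by
  classical
  haveI : Nonempty (Fin n) := ⟨⟨0, hn⟩⟩
  have hred : ∀ α : ℝ, specRad (A α) = 1 ↔ F (A α) = 1 := by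
    intro α
    rw [specRad_eq hn, ENNReal.toReal_eq_one_iff]
  simp only [hred]
  -- monotonicity of F along the family
  have hFmono : ∀ a b : ℝ, a ≤ b → F (A a) ≤ F (A b) := fun a b hab =>
    F_mono hn (hnonneg a) fun i j => (hmono i j).monotone hab
  -- scaling comparison
  have hscale : ∀ (a b : ℝ) (t : ℝ≥0), (∀ i j, (t : ℝ) * A a i j ≤ A b i j) →
      (t : ℝ≥0∞) * F (A a) ≤ F (A b) := by
    intro a b t h
    rw [← F_smul t (A a)]
    refine F_mono hn (fun i j => ?_) (fun i j => ?_)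
    · simp only [Matrix.smul_apply, smul_eq_mul]
      exact mul_nonneg t.coe_nonneg (hnonneg a i j)
    · simpa only [Matrix.smul_apply, smul_eq_mul] using h i j
  -- strict increase across the family
  have hgt : ∀ a b : ℝ, a < b → ∃ t : ℝ, 1 < t ∧ ∀ i j, t * A a i j ≤ A b i j := by
    intro a b hab
    set f : Fin n × Fin n → ℝ :=
      fun p => if A a p.1 p.2 ≤ 0 then 2 else A b p.1 p.2 / A a p.1 p.2 with hf
    have hne : (Finset.univ : Finset (Fin n × Fin n)).Nonempty :=
      ⟨(⟨0, hn⟩, ⟨0, hn⟩), Finset.mem_univ _⟩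
    refine ⟨Finset.univ.inf' hne f, ?_, ?_⟩
    · rw [Finset.lt_inf'_iff]
      intro p _
      by_cases h : A a p.1 p.2 ≤ 0
      · simp only [hf, if_pos h]; norm_num
      · push_neg at h
        simp only [hf, if_neg (not_le.mpr h)]
        exact (one_lt_div h).mpr (hmono p.1 p.2 hab)
    · intro i j
      by_cases h : A a i j ≤ 0
      · rw [le_antisymm h (hnonneg a i j), mul_zero]
        exact hnonneg b i j
      · push_neg at h
        have hle : Finset.univ.inf' hne f ≤ f (i, j) := Finset.inf'_le f (Finset.mem_univ _)
        rw [show f (i, j) = A b i j / A a i j from if_neg (not_le.mpr h)] at hle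
        calc Finset.univ.inf' hne f * A a i j
            ≤ (A b i j / A a i j) * A a i j := mul_le_mul_of_nonneg_right hle h.le
          _ = A b i j := div_mul_cancel₀ _ h.ne'
  have hstrictlt : ∀ a b : ℝ, a < b → F (A a) = 1 → 1 < F (A b) := by
    intro a b hab hFa
    obtain ⟨t, ht1, hle⟩ := hgt a b hab
    have ht0 : 0 ≤ t := by linarith
    have h := hscale a b t.toNNReal (by
      intro i j
      rw [Real.coe_toNNReal _ ht0]
      exact hle i j)
    rw [hFa, mul_one] at h
    refine lt_of_lt_of_le ?_ h
    rw [← ENNReal.coe_one, ENNReal.coe_lt_coe, ← Real.toNNReal_one]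
    exact (Real.toNNReal_lt_toNNReal_iff (by linarith)).mpr ht1
  -- the set where F < 1
  set S : Set ℝ := {α | F (A α) < 1} with hS
  have hSne : S.Nonempty := by
    have h2 : ∀ᶠ α in atBot, ∀ i, (∑ j, A α i j) < 1/2 :=
      eventually_all.mpr fun i => (hrow0 i).eventually_lt_const (by norm_num)
    obtain ⟨α₀, hα₀⟩ := h2.exists
    refine ⟨α₀, ?_⟩
    calc F (A α₀) ≤ ENNReal.ofReal (1/2) :=
          F_le_ofReal hn (hnonneg α₀) (by norm_num) fun i => (hα₀ i).le
      _ < 1 := by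
          rw [← ENNReal.ofReal_one]
          exact (ENNReal.ofReal_lt_ofReal_iff one_pos).mpr (by norm_num)
  have hSbdd : BddAbove S := by
    have h2 : ∀ᶠ α in atTop, ∀ i, (2:ℝ) ≤ ∑ j, A α i j :=
      eventually_all.mpr fun i => (hrowTop i).eventually_ge_atTop 2
    obtain ⟨a, ha⟩ := eventually_atTop.mp h2
    refine ⟨a, fun α hα => ?_⟩
    by_contra hgt'
    push_neg at hgt'
    have h3 : ENNReal.ofReal 2 ≤ F (A α) :=
      ofReal_le_F hn (hnonneg α) (by norm_num) (ha α hgt'.le)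
    have h4 : (1 : ℝ≥0∞) < F (A α) := by
      refine lt_of_lt_of_le ?_ h3
      rw [← ENNReal.ofReal_one]
      exact (ENNReal.ofReal_lt_ofReal_iff (by norm_num)).mpr (by norm_num)
    exact absurd hα (not_lt.mpr h4.le)
  set α' : ℝ := sSup S with hα'
  have hbelow : ∀ β : ℝ, β < α' → F (A β) < 1 := by
    intro β hβ
    obtain ⟨s, hsS, hβs⟩ := exists_lt_of_lt_csSup hSne hβ
    exact lt_of_le_of_lt (hFmono β s hβs.le) hsS
  -- not < 1
  have notlt : ¬ F (A α') < 1 := by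
    intro hlt
    have h1 : ∀ᶠ k : ℕ in atTop, (‖CM ((A α') ^ k)‖₊ : ℝ≥0∞) ^ (1/(k:ℝ)) < 1 :=
      (F_gelfand (A α')).eventually_lt_const hlt
    obtain ⟨k, hk1, hkge⟩ := (h1.and (eventually_ge_atTop 1)).exists
    have hbase : (‖CM ((A α') ^ k)‖₊ : ℝ≥0∞) < 1 := by
      by_contra hge
      push_neg at hge
      have : (1:ℝ≥0∞) ≤ (‖CM ((A α') ^ k)‖₊ : ℝ≥0∞) ^ (1/(k:ℝ)) := by
        calc (1:ℝ≥0∞) = (1:ℝ≥0∞) ^ (1/(k:ℝ)) := (ENNReal.one_rpow _).symm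
          _ ≤ _ := ENNReal.rpow_le_rpow hge (by positivity)
      exact absurd hk1 (not_lt.mpr this)
    have hbaseR : (‖CM ((A α') ^ k)‖₊ : ℝ) < 1 := by exact_mod_cast hbase
    set s : ℝ := (1 + (‖CM ((A α') ^ k)‖₊ : ℝ)) / 2 with hsdef
    have hs1 : s < 1 := by rw [hsdef]; linarith
    have hs0 : (0:ℝ) ≤ s := by positivity
    have hev : ∀ᶠ β in 𝓝 α', ∀ i, (∑ j, ((A β) ^ k) i j) < s := by
      refine eventually_all.mpr fun i => ?_
      have hcs : Continuous fun β => ∑ j, ((A β) ^ k) i j :=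
        continuous_finset_sum _ fun j _ => cont_pow_entry hcont k i j
      have hval : (∑ j, ((A α') ^ k) i j) < s := by
        refine lt_of_le_of_lt (rowsum_le_nnnorm_CM (pow_nonneg' (hnonneg α') k) i) ?_
        rw [hsdef]; linarith
      exact hcs.continuousAt.eventually_lt_const hval
    obtain ⟨β, hβev, hβgt⟩ :=
      ((hev.filter_mono nhdsWithin_le_nhds).and
        (eventually_mem_nhdsWithin (s := Set.Ioi α'))).exists
    obtain ⟨m, rfl⟩ : ∃ m, k = m + 1 := ⟨k - 1, by omega⟩
    have h4 : F (A β) ≤ (ENNReal.ofReal s) ^ (1/(m+1:ℝ)) := by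
      refine (F_le_pow hn (A β) m).trans (ENNReal.rpow_le_rpow ?_ (by positivity))
      exact coe_nnnorm_CM_le (pow_nonneg' (hnonneg β) (m+1)) hs0 fun i => (hβev i).le
    have h5 : (ENNReal.ofReal s) ^ (1/(m+1:ℝ)) < 1 := by
      refine ENNReal.rpow_lt_one ?_ (by positivity)
      rw [← ENNReal.ofReal_one]
      exact (ENNReal.ofReal_lt_ofReal_iff one_pos).mpr hs1
    have hβS : β ∈ S := lt_of_le_of_lt h4 h5
    exact absurd (le_csSup hSbdd hβS) (not_le.mpr hβgt)
  -- not > 1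
  have notgt : ¬ (1:ℝ≥0∞) < F (A α') := by
    intro hgt'
    set R : ℝ := (F (A α')).toReal with hR
    have hRtop : F (A α') ≠ ⊤ := F_ne_top hn _
    have hR1 : 1 < R := by
      have := (ENNReal.toReal_lt_toReal (by simp) hRtop).mpr hgt'
      simpa using this
    have hRpos : 0 < R := lt_trans one_pos hR1
    set t : ℝ := (1/R + 1)/2 with ht
    have ht0 : 0 < t := by positivity
    have ht1 : t < 1 := by
      have h1R : 1/R < 1 := by
        rw [div_lt_one hRpos]; exact hR1
      rw [ht]; linarith
    have htR : 1 < t * R := by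
      have h' : (1/R) * R = 1 := one_div_mul_cancel (ne_of_gt hRpos)
      have : t * R = (1 + R)/2 := by rw [ht]; field_simp
      rw [this]; linarith
    have hev : ∀ᶠ β in 𝓝 α', ∀ i j, t * A α' i j ≤ A β i j := by
      refine eventually_all.mpr fun i => eventually_all.mpr fun j => ?_
      rcases (hnonneg α' i j).eq_or_lt with hz | hp
      · exact Eventually.of_forall fun β => by rw [← hz, mul_zero]; exact hnonneg β i j
      · have hlt : t * A α' i j < A α' i j := by nlinarith
        have h2 : ∀ᶠ β in 𝓝 α', t * A α' i j < A β i j :=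
          (hcont i j).continuousAt.eventually_const_lt hlt
        exact h2.mono fun β hb => hb.le
    obtain ⟨β, hβle, hβlt⟩ :=
      ((hev.filter_mono nhdsWithin_le_nhds).and
        (eventually_mem_nhdsWithin (s := Set.Iio α'))).exists
    have h6 : (t.toNNReal : ℝ≥0∞) * F (A α') ≤ F (A β) :=
      hscale α' β t.toNNReal (by
        intro i j
        rw [Real.coe_toNNReal _ ht0.le]
        exact hβle i j)
    have h7 : (1:ℝ≥0∞) < (t.toNNReal : ℝ≥0∞) * F (A α') := by
      rw [show F (A α') = ENNReal.ofReal R from (ENNReal.ofReal_toReal hRtop).symm,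
        show ((t.toNNReal : ℝ≥0∞)) = ENNReal.ofReal t from rfl,
        ← ENNReal.ofReal_mul ht0.le, ← ENNReal.ofReal_one]
      exact (ENNReal.ofReal_lt_ofReal_iff (by linarith)).mpr htR
    have h8 : (1:ℝ≥0∞) < F (A β) := lt_of_lt_of_le h7 h6
    exact absurd (hbelow β hβlt) (not_lt.mpr h8.le)
  have hsol : F (A α') = 1 := le_antisymm (not_lt.mp notgt) (not_lt.mp notlt)
  refine ⟨α', hsol, fun y hy => ?_⟩
  rcases lt_trichotomy y α' with h | h | h
  · exact absurd hy (ne_of_lt (hbelow y h))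
  · exact h
  · exact absurd hy.symm (ne_of_lt (hstrictlt α' y h hsol))
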